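/- Let h ∈ ℝⁿ and for r ≥ 1 let T_r be the index set of the components of h ranked (r−1)s+1 through rs in decreasing order of magnitude. Then Σ_{r≥2} ‖h_{T_r}‖₂² ≤ (1/s) ‖h‖₁². -/

import Mathlib

open Finset Real

/-- if the entries of `h` are arranged in decreasing order of magnitude
by the permutation `σ` (so that the blocks `T_r`, `r ≥ 1`, consist of the entries
ranked `(r-1)s+1` through `rs`), then the sum of `‖h_{T_r}‖₂²` over all blocks
`r ≥ 2` (i.e. over all indices of rank `> s`) is at most `(1/s)‖h‖₁²`. -/
theorem stmt_7 (n s : ℕ) (hs : 0 < s) (h : Fin n → ℝ) (σ : Equiv.Perm (Fin n))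
    (hσ : ∀ i j : Fin n, i ≤ j → |h (σ j)| ≤ |h (σ i)|) :
    (∑ i ∈ Finset.univ.filter (fun i : Fin n => s ≤ i.val), (h (σ i)) ^ 2)
      ≤ (1 / (s : ℝ)) * (∑ i, |h i|) ^ 2 := by
  rcases le_or_gt n s with hn | hn
  · have hempty : (Finset.univ.filter (fun i : Fin n => s ≤ i.val)) = ∅ := by
      ext i
      simp only [mem_filter, mem_univ, true_and, Finset.notMem_empty, iff_false, not_le]
      exact lt_of_lt_of_le i.isLt hn
    rw [hempty, Finset.sum_empty]
    positivity
  · set A := ∑ j ∈ univ.filter (fun j : Fin n => j.val < s), |h (σ j)| with hA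
    set B := ∑ i ∈ univ.filter (fun i : Fin n => s ≤ i.val), |h (σ i)| with hB
    have hA0 : 0 ≤ A := Finset.sum_nonneg fun j _ => abs_nonneg _
    have hB0 : 0 ≤ B := Finset.sum_nonneg fun j _ => abs_nonneg _
    have hAB : A + B = ∑ i, |h i| := by
      rw [hA, hB]
      have : (univ.filter (fun i : Fin n => s ≤ i.val)) =
          (univ.filter (fun i : Fin n => ¬ i.val < s)) := by
        apply Finset.filter_congr
        intro i _
        simp [not_lt]
      rw [this, Finset.sum_filter_add_sum_filter_not]
      exact Equiv.sum_comp σ (fun i => |h i|)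
    have hcard : (univ.filter fun j : Fin n => j.val < s).card = s := by
      have : (univ.filter fun j : Fin n => j.val < s) = Finset.Iio (⟨s, hn⟩ : Fin n) := by
        ext j
        simp [Fin.lt_def]
      rw [this, Fin.card_Iio]
    have key : ∀ i : Fin n, s ≤ i.val → (s : ℝ) * |h (σ i)| ≤ A := by
      intro i hi
      have := Finset.card_nsmul_le_sum (univ.filter fun j : Fin n => j.val < s)
        (fun j => |h (σ j)|) (|h (σ i)|) ?_
      · rw [hcard, nsmul_eq_mul] at this
        exact this
      · intro j hj
        simp only [mem_filter, mem_univ, true_and] at hj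
        exact hσ j i (Fin.le_def.mpr (le_trans hj.le hi))
    have hs' : (0:ℝ) < s := by exact_mod_cast hs
    have step : (∑ i ∈ Finset.univ.filter (fun i : Fin n => s ≤ i.val), (h (σ i)) ^ 2)
        ≤ (1 / (s : ℝ)) * (B * A) := by
      rw [hB, Finset.sum_mul, Finset.mul_sum]
      apply Finset.sum_le_sum
      intro i hi
      simp only [mem_filter, mem_univ, true_and] at hi
      have h1 := key i hi
      have h2 : (h (σ i)) ^ 2 = |h (σ i)| * |h (σ i)| := by
        rw [sq]; exact (abs_mul_abs_self _).symm
      rw [h2]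
      rw [div_mul_eq_mul_div, one_mul, le_div_iff₀ hs']
      calc |h (σ i)| * |h (σ i)| * s = |h (σ i)| * ((s:ℝ) * |h (σ i)|) := by ring
        _ ≤ |h (σ i)| * A := by
            exact mul_le_mul_of_nonneg_left h1 (abs_nonneg _)
    refine step.trans ?_
    rw [← hAB]
    apply mul_le_mul_of_nonneg_left _ (by positivity)
    nlinarith [sq_nonneg (A - B), sq_nonneg (A + B)]
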